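/- Let k > 1 and κ > 1 be real numbers and let Ψ : ℝ → ℝ be a continuous, strictly increasing surjection with Ψ(0) = 0, Ψ(1) = 1, Ψ(−1) = −1, satisfying Ψ(k·x) = κ·Ψ(x) for all x ∈ ℝ. Assume moreover that Ψ is continuously differentiable on ℝ ∖ {0} with Ψ′(x) > 0 for every x ≠ 0. Then Ψ is quasi-symmetric: there exists a constant M ≥ 1 such that M⁻¹ ≤ (Ψ(x) − Ψ(x−t))/(Ψ(x+t) − Ψ(x)) ≤ M for every x ∈ ℝ and every t > 0. -/

import Mathlib

/-- **Quasi-symmetry of Ψ** (core analytic step of the gluing lemma).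
If `k, κ > 1` and `Ψ : ℝ → ℝ` is a continuous strictly increasing surjection with
`Ψ 0 = 0`, `Ψ 1 = 1`, `Ψ (-1) = -1`, satisfying `Ψ (k·x) = κ·Ψ x` for all `x`, and
`Ψ` is continuously differentiable on `ℝ \ {0}` with positive derivative there,
then `Ψ` is quasi-symmetric. -/
theorem quasisymmetry_of_functional_equation
    (k κ : ℝ) (hk : 1 < k) (hκ : 1 < κ)
    (Ψ : ℝ → ℝ) (hcont : Continuous Ψ) (hmono : StrictMono Ψ)
    (hsurj : Function.Surjective Ψ)
    (h0 : Ψ 0 = 0) (h1 : Ψ 1 = 1) (hm1 : Ψ (-1) = -1)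
    (hfun : ∀ x : ℝ, Ψ (k * x) = κ * Ψ x)
    (Ψ' : ℝ → ℝ)
    (hderiv : ∀ x : ℝ, x ≠ 0 → HasDerivAt Ψ (Ψ' x) x)
    (hderivCont : ContinuousOn Ψ' {x : ℝ | x ≠ 0})
    (hderivPos : ∀ x : ℝ, x ≠ 0 → 0 < Ψ' x) :
    ∃ M : ℝ, 1 ≤ M ∧ ∀ x t : ℝ, 0 < t →
      M⁻¹ ≤ (Ψ x - Ψ (x - t)) / (Ψ (x + t) - Ψ x) ∧
        (Ψ x - Ψ (x - t)) / (Ψ (x + t) - Ψ x) ≤ M := by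
  have hk0 : (0 : ℝ) < k := lt_trans one_pos hk
  have hκ0 : (0 : ℝ) < κ := lt_trans one_pos hκ
  -- functional equation for inverse powers
  have hinv : ∀ y : ℝ, Ψ (k⁻¹ * y) = κ⁻¹ * Ψ y := by
    intro y
    have h := hfun (k⁻¹ * y)
    rw [mul_inv_cancel_left₀ hk0.ne'] at h
    rw [h]
    field_simp
  -- functional equation for integer powers
  have hz : ∀ n : ℤ, ∀ y : ℝ, Ψ (k ^ n * y) = κ ^ n * Ψ y := by
    intro n
    induction n using Int.induction_on with
    | zero => simp
    | succ n ih =>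
      intro y
      have e : (k : ℝ) ^ ((n : ℤ) + 1) * y = k * (k ^ (n : ℤ) * y) := by
        rw [zpow_add_one₀ hk0.ne']; ring
      rw [e, hfun, ih, zpow_add_one₀ hκ0.ne']; ring
    | pred n ih =>
      intro y
      have e : (k : ℝ) ^ (-(n : ℤ) - 1) * y = k⁻¹ * (k ^ (-(n : ℤ)) * y) := by
        rw [zpow_sub_one₀ hk0.ne']; ring
      rw [e, hinv, ih, zpow_sub_one₀ hκ0.ne']; ring
  -- the ratio function
  set F : ℝ × ℝ → ℝ := fun p => (Ψ p.1 - Ψ (p.1 - p.2)) / (Ψ (p.1 + p.2) - Ψ p.1) with hF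
  -- compact region for "large t"
  set S1 : Set (ℝ × ℝ) := Set.Icc (-k) k ×ˢ Set.Icc (1 / 2 : ℝ) k with hS1
  have hS1c : IsCompact S1 := isCompact_Icc.prod isCompact_Icc
  have hS1ne : S1.Nonempty := by
    refine ⟨(0, 1), Set.mem_prod.2 ⟨Set.mem_Icc.2 ⟨?_, ?_⟩, Set.mem_Icc.2 ⟨?_, ?_⟩⟩⟩
    · show -k ≤ 0; linarith
    · show (0:ℝ) ≤ k; linarith
    · show (1:ℝ)/2 ≤ 1; norm_num
    · show (1:ℝ) ≤ k; linarith
  have hFpos : ∀ p ∈ S1, 0 < F p := by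
    rintro ⟨x, t⟩ ⟨_, ht, _⟩
    have ht0 : (0 : ℝ) < t := by simp only at ht; linarith
    exact div_pos (sub_pos.2 (hmono (by linarith))) (sub_pos.2 (hmono (by linarith)))
  have hFcont : ContinuousOn F S1 := by
    apply ContinuousOn.div
    · exact ((hcont.comp continuous_fst).sub
        (hcont.comp (continuous_fst.sub continuous_snd))).continuousOn
    · exact ((hcont.comp (continuous_fst.add continuous_snd)).sub
        (hcont.comp continuous_fst)).continuousOn
    · rintro ⟨x, t⟩ ⟨_, ht, _⟩
      have ht0 : (0 : ℝ) < t := by simp only at ht; linarith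
      exact sub_ne_zero.2 (hmono (by linarith : x < x + t)).ne'
  obtain ⟨pM, hpM, hpMmax⟩ := hS1c.exists_isMaxOn hS1ne hFcont
  obtain ⟨pm, hpm, hpmmin⟩ := hS1c.exists_isMinOn hS1ne hFcont
  set M₁ : ℝ := F pM with hM₁
  set m₁ : ℝ := F pm with hm₁
  have hm₁0 : 0 < m₁ := hFpos pm hpm
  -- compact region for the derivative, away from 0
  set J : Set ℝ := Set.Icc (-(2 * k)) (-(1 / 2)) ∪ Set.Icc (1 / 2) (2 * k) with hJ
  have hJc : IsCompact J := isCompact_Icc.union isCompact_Icc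
  have hJne : J.Nonempty := ⟨1, Or.inr ⟨by norm_num, by linarith⟩⟩
  have hJ0 : ∀ y ∈ J, y ≠ 0 := by
    rintro y (⟨_, h2⟩ | ⟨h1, _⟩)
    · intro h; rw [h] at h2; norm_num at h2
    · intro h; rw [h] at h1; norm_num at h1
  have hΨ'cont : ContinuousOn Ψ' J := hderivCont.mono fun y hy => hJ0 y hy
  obtain ⟨yC, hyC, hyCmax⟩ := hJc.exists_isMaxOn hJne hΨ'cont
  obtain ⟨yc, hyc, hycmin⟩ := hJc.exists_isMinOn hJne hΨ'cont
  set C : ℝ := Ψ' yC with hC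
  set c : ℝ := Ψ' yc with hc
  have hc0 : 0 < c := hderivPos yc (hJ0 yc hyc)
  have hC0 : 0 < C := hderivPos yC (hJ0 yC hyC)
  have hcC : c ≤ C := hycmin hyC
  -- the constant
  refine ⟨max 1 (max (max M₁ m₁⁻¹) (C / c)), le_max_left _ _, ?_⟩
  set M : ℝ := max 1 (max (max M₁ m₁⁻¹) (C / c)) with hMdef
  have hM0 : 0 < M := lt_of_lt_of_le one_pos (le_max_left _ _)
  have hMinv_m₁ : M⁻¹ ≤ m₁ := by
    have : m₁⁻¹ ≤ M :=
      le_trans (le_trans (le_max_right _ _) (le_max_left _ _)) (le_max_right _ _)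
    calc M⁻¹ ≤ (m₁⁻¹)⁻¹ := by
          apply inv_anti₀ (by positivity) this
      _ = m₁ := inv_inv m₁
  have hMinv_cC : M⁻¹ ≤ c / C := by
    have hCcM : C / c ≤ M := le_trans (le_max_right _ _) (le_max_right _ _)
    have : M⁻¹ ≤ (C / c)⁻¹ := inv_anti₀ (by positivity) hCcM
    calc M⁻¹ ≤ (C / c)⁻¹ := this
      _ = c / C := by rw [inv_div]
  have hM₁M : M₁ ≤ M :=
    le_trans (le_trans (le_max_left _ _) (le_max_left _ _)) (le_max_right _ _)
  have hCcM : C / c ≤ M := le_trans (le_max_right _ _) (le_max_right _ _)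
  -- main claim for normalized points
  have key : ∀ x t : ℝ, 0 < t → 1 ≤ max |x| t → max |x| t ≤ k →
      M⁻¹ ≤ F (x, t) ∧ F (x, t) ≤ M := by
    intro x t ht h1r hrk
    by_cases hhalf : 1 / 2 ≤ t
    · -- case A : use the compact region S1
      have hxk : |x| ≤ k := le_trans (le_max_left _ _) hrk
      have htk : t ≤ k := le_trans (le_max_right _ _) hrk
      have hmem : (x, t) ∈ S1 := ⟨abs_le.1 hxk, hhalf, htk⟩
      exact ⟨le_trans hMinv_m₁ (hpmmin hmem), le_trans (hpMmax hmem) hM₁M⟩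
    · -- case B : small t, use MVT
      push_neg at hhalf
      have hx1 : 1 ≤ |x| := by
        rcases le_max_iff.1 h1r with h | h
        · exact h
        · linarith
      have hxk : |x| ≤ k := le_trans (le_max_left _ _) hrk
      -- the interval [x - t, x + t] lies in J
      have hsub : ∀ y : ℝ, x - t ≤ y → y ≤ x + t → y ∈ J := by
        intro y hy1 hy2
        rcases le_abs.1 hx1 with hx | hx
        · right
          constructor
          · linarith
          · have : x ≤ |x| := le_abs_self x
            linarith
        · left
          constructor
          · have : -x ≤ |x| := neg_le_abs x
            linarith
          · linarith
      -- MVT on [x - t, x]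
      have hab1 : x - t < x := by linarith
      obtain ⟨ξ, hξ, hξeq⟩ := exists_hasDerivAt_eq_slope Ψ Ψ' hab1 hcont.continuousOn
        (fun y hy => hderiv y (hJ0 y (hsub y hy.1.le (by linarith [hy.2]))))
      -- MVT on [x, x + t]
      have hab2 : x < x + t := by linarith
      obtain ⟨η, hη, hηeq⟩ := exists_hasDerivAt_eq_slope Ψ Ψ' hab2 hcont.continuousOn
        (fun y hy => hderiv y (hJ0 y (hsub y (by linarith [hy.1]) hy.2.le)))
      have hξJ : ξ ∈ J := hsub ξ hξ.1.le (by linarith [hξ.2])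
      have hηJ : η ∈ J := hsub η (by linarith [hη.1]) hη.2.le
      have hξc : c ≤ Ψ' ξ := hycmin hξJ
      have hξC : Ψ' ξ ≤ C := hyCmax hξJ
      have hηc : c ≤ Ψ' η := hycmin hηJ
      have hηC : Ψ' η ≤ C := hyCmax hηJ
      have e1 : Ψ x - Ψ (x - t) = Ψ' ξ * t := by
        have : x - (x - t) = t := by ring
        rw [this] at hξeq
        field_simp at hξeq
        linarith
      have e2 : Ψ (x + t) - Ψ x = Ψ' η * t := by
        have : x + t - x = t := by ring
        rw [this] at hηeq
        field_simp at hηeq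
        linarith
      have hFeq : F (x, t) = Ψ' ξ / Ψ' η := by
        simp only [hF, e1, e2]
        rw [mul_div_mul_right _ _ ht.ne']
      rw [hFeq]
      constructor
      · refine le_trans hMinv_cC ?_
        exact div_le_div₀ (hderivPos ξ (hJ0 ξ hξJ)).le hξc (hderivPos η (hJ0 η hηJ)) hηC
      · exact le_trans (div_le_div₀ hC0.le hξC hc0 hηc) hCcM
  -- now the general case by rescaling
  intro x t ht
  have hr0 : 0 < max |x| t := lt_of_lt_of_le ht (le_max_right _ _)
  obtain ⟨n, hn1, hn2⟩ := exists_mem_Ico_zpow hr0 hk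
  set u : ℝ := k ^ n with hu
  have hu0 : 0 < u := zpow_pos hk0 n
  set x' : ℝ := x / u with hx'
  set t' : ℝ := t / u with ht'
  have ht'0 : 0 < t' := div_pos ht hu0
  have hux : u * x' = x := by
    rw [hx', mul_comm, div_mul_cancel₀ x hu0.ne']
  have huxt1 : u * (x' - t') = x - t := by
    rw [hx', ht']; field_simp
  have huxt2 : u * (x' + t') = x + t := by
    rw [hx', ht']; field_simp
  have hmax' : max |x'| t' = max |x| t / u := by
    rw [hx', ht', abs_div, abs_of_pos hu0, max_div_div_right hu0.le]
  have h1r' : 1 ≤ max |x'| t' := by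
    rw [hmax', le_div_iff₀ hu0, one_mul]; exact hn1
  have hrk' : max |x'| t' ≤ k := by
    rw [hmax', div_le_iff₀ hu0]
    have : (k : ℝ) ^ (n + 1) = u * k := by rw [hu, zpow_add_one₀ hk0.ne']
    calc max |x| t ≤ k ^ (n + 1) := hn2.le
      _ = u * k := this
      _ = k * u := mul_comm u k
  have hratio : (Ψ x - Ψ (x - t)) / (Ψ (x + t) - Ψ x) = F (x', t') := by
    have eA : Ψ x = κ ^ n * Ψ x' := by rw [← hux, hz]
    have eB : Ψ (x - t) = κ ^ n * Ψ (x' - t') := by rw [← huxt1, hz]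
    have eC : Ψ (x + t) = κ ^ n * Ψ (x' + t') := by rw [← huxt2, hz]
    have hκn : (κ : ℝ) ^ n ≠ 0 := (zpow_pos hκ0 n).ne'
    simp only [hF, eA, eB, eC]
    rw [← mul_sub, ← mul_sub, mul_div_mul_left _ _ hκn]
  rw [hratio]
  exact key x' t' ht'0 h1r' hrk'
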